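/- Let F = ⟨a⟩ be the infinite cyclic group and kF its group algebra over a field k. The map Δ: kF → kF ⊗ kF defined on the basis by Δ(a^{n+1}) = Σ_{i=0}^{n} a^i ⊗ a^{n−i} for n ≥ 0, Δ(e) = 0, and Δ(a^{−n}) = −Σ_{i=1}^{n} a^{−(n+1−i)} ⊗ a^{−i} for n ≥ 1, satisfies the infinitesimal bialgebra (derivation) identity Δ(xy) = (x ⊗ 1)Δ(y) + Δ(x)(1 ⊗ y) for all x, y ∈ kF. -/

import Mathlib

open scoped TensorProduct

variable (k : Type*) [Field k]

/-- The group algebra of the infinite cyclic group, with basis `aⁿ = single n 1`, `n ∈ ℤ`. -/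
abbrev GA := AddMonoidAlgebra k ℤ

/-- The value of the coproduct on the basis element `aⁿ`:
`Δ(aⁿ) = Σ_{i=0}^{n-1} aⁱ ⊗ a^{n-1-i}` for `n > 0`, `Δ(a⁰) = 0`, and
`Δ(a⁻ᵐ) = −Σ_{i=1}^{m} a^{−(m+1−i)} ⊗ a^{−i}` for `m ≥ 1`. -/
noncomputable def Dval (n : ℤ) : GA k ⊗[k] GA k :=
  if 0 < n then
    ∑ i ∈ Finset.range n.toNat,
      AddMonoidAlgebra.single (i : ℤ) (1 : k) ⊗ₜ[k]
        AddMonoidAlgebra.single (n - 1 - (i : ℤ)) (1 : k)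
  else if n < 0 then
    -∑ i ∈ Finset.range (-n).toNat,
      AddMonoidAlgebra.single (n + (i : ℤ)) (1 : k) ⊗ₜ[k]
        AddMonoidAlgebra.single (-(i : ℤ) - 1) (1 : k)
  else 0

/-- The coproduct `Δ : kF → kF ⊗ kF`, extended linearly from the basis. -/
noncomputable def Δ : GA k →ₗ[k] GA k ⊗[k] GA k :=
  Finsupp.lift (GA k ⊗[k] GA k) k ℤ (Dval k) ∘ₗ
    (AddMonoidAlgebra.coeffLinearEquiv k : GA k ≃ₗ[k] (ℤ →₀ k)).toLinearMap

lemma GAT_mul_neg (x y : GA k ⊗[k] GA k) : x * -y = -(x * y) := by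
  have h := @mul_neg (GA k ⊗[k] GA k) _ _ x y
  exact h

lemma GAT_neg_mul (x y : GA k ⊗[k] GA k) : -x * y = -(x * y) := by
  have h := @neg_mul (GA k ⊗[k] GA k) _ _ x y
  exact h

lemma GAT_sub (x y : GA k ⊗[k] GA k) : x - y = x + -y := sub_eq_add_neg x y

lemma GAT_negadd (x y : GA k ⊗[k] GA k) : -(x + y) = -x + -y := by abel

lemma GAT_negadd_cancel (x y : GA k ⊗[k] GA k) : -(x + y) + y = -x := by abel

lemma Dval_zero : Dval k 0 = 0 := by simp [Dval]

lemma Dval_one : Dval k 1 = (1 : GA k) ⊗ₜ[k] (1 : GA k) := by simp [Dval]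

lemma Dval_negone : Dval k (-1) = -((AddMonoidAlgebra.single (-1:ℤ) (1:k) : GA k) ⊗ₜ[k]
    (AddMonoidAlgebra.single (-1:ℤ) (1:k) : GA k)) := by simp [Dval]

/-- `Δ(aⁿ⁺¹) = (a ⊗ 1)Δ(aⁿ) + 1 ⊗ aⁿ`. -/
lemma step1 (n : ℤ) : Dval k (n + 1) =
    (AddMonoidAlgebra.single (1:ℤ) (1:k) ⊗ₜ[k] (1 : GA k)) * Dval k n
      + (1 : GA k) ⊗ₜ[k] AddMonoidAlgebra.single n (1:k) := by
  rcases lt_trichotomy n 0 with h | h | h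
  · rcases eq_or_lt_of_le (by omega : n ≤ -1) with h1 | h1
    · subst_eqs
      rw [Dval_negone, (by norm_num : (-1:ℤ) + 1 = 0), Dval_zero, GAT_mul_neg,
        Algebra.TensorProduct.tmul_mul_tmul]
      simp only [one_mul, mul_one, AddMonoidAlgebra.single_mul_single,
        (by norm_num : (1:ℤ) + -1 = 0)]
      exact (neg_add_cancel _).symm
    · have h2 : n + 1 < 0 := by omega
      rw [Dval, if_neg (by omega : ¬ (0:ℤ) < n + 1), if_pos h2,
        Dval, if_neg (by omega : ¬ (0:ℤ) < n), if_pos h]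
      have hN : (-n).toNat = (-(n+1)).toNat + 1 := by omega
      rw [hN, Finset.sum_range_succ, GAT_mul_neg, mul_add, Finset.mul_sum]
      simp only [Algebra.TensorProduct.tmul_mul_tmul,
        AddMonoidAlgebra.single_mul_single, one_mul, mul_one]
      have hc : ((-(n+1)).toNat : ℤ) = -(n+1) := by omega
      simp only [hc]
      have hlast : (AddMonoidAlgebra.single ((1:ℤ) + (n + -(n+1))) (1:k) : GA k) ⊗ₜ[k]
          (AddMonoidAlgebra.single (-(-(n+1)) - 1) (1:k) : GA k)
          = (1 : GA k) ⊗ₜ[k] AddMonoidAlgebra.single n (1:k) := by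
        rw [(by ring : (1:ℤ) + (n + -(n+1)) = 0), (by ring : -(-(n+1)) - 1 = n),
          ← AddMonoidAlgebra.one_def]
      rw [hlast, GAT_negadd_cancel, neg_inj]
      apply Finset.sum_congr rfl
      intro i _
      rw [(by ring : n + 1 + (i:ℤ) = 1 + (n + (i:ℤ)))]
  · subst h
    rw [Dval_zero, mul_zero, zero_add, zero_add, Dval_one, ← AddMonoidAlgebra.one_def]
  · have h1 : (0:ℤ) < n + 1 := by omega
    rw [Dval, if_pos h1, Dval, if_pos h]
    have hN : (n+1).toNat = n.toNat + 1 := by omega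
    rw [hN, Finset.sum_range_succ', Finset.mul_sum]
    simp only [Algebra.TensorProduct.tmul_mul_tmul,
      AddMonoidAlgebra.single_mul_single, one_mul, mul_one]
    rw [Nat.cast_zero, (by ring : n + 1 - 1 - (0:ℤ) = n), ← AddMonoidAlgebra.one_def]
    congr 1
    apply Finset.sum_congr rfl
    intro i _
    push_cast
    congr 2 <;> ring

/-- `Δ(aⁿ⁻¹) = (a⁻¹ ⊗ 1)Δ(aⁿ) - a⁻¹ ⊗ aⁿ⁻¹`. -/
lemma stepneg (n : ℤ) : Dval k (n - 1) =
    (AddMonoidAlgebra.single (-1:ℤ) (1:k) ⊗ₜ[k] (1 : GA k)) * Dval k n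
      - (AddMonoidAlgebra.single (-1:ℤ) (1:k) : GA k) ⊗ₜ[k]
          AddMonoidAlgebra.single (n-1) (1:k) := by
  rcases lt_trichotomy n 0 with h | h | h
  · have h2 : n - 1 < 0 := by omega
    rw [Dval, if_neg (by omega : ¬ (0:ℤ) < n - 1), if_pos h2,
      Dval, if_neg (by omega : ¬ (0:ℤ) < n), if_pos h]
    have hN : (-(n-1)).toNat = (-n).toNat + 1 := by omega
    rw [hN, Finset.sum_range_succ, GAT_mul_neg, Finset.mul_sum]
    simp only [Algebra.TensorProduct.tmul_mul_tmul,
      AddMonoidAlgebra.single_mul_single, one_mul, mul_one]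
    have hc : ((-n).toNat : ℤ) = -n := by omega
    simp only [hc]
    have hlast : (AddMonoidAlgebra.single (n - 1 + -n) (1:k) : GA k) ⊗ₜ[k]
        (AddMonoidAlgebra.single (-(-n) - 1) (1:k) : GA k)
        = (AddMonoidAlgebra.single (-1:ℤ) (1:k) : GA k) ⊗ₜ[k]
            AddMonoidAlgebra.single (n-1) (1:k) := by
      rw [(by ring : n - 1 + -n = (-1:ℤ)), (by ring : -(-n) - 1 = n - 1)]
    rw [hlast, GAT_negadd, GAT_sub]
    congr 1
    rw [neg_inj]
    apply Finset.sum_congr rfl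
    intro i _
    rw [(by ring : n - 1 + (i:ℤ) = -1 + (n + (i:ℤ)))]
  · subst h
    rw [(by norm_num : (0:ℤ) - 1 = -1), Dval_zero, mul_zero, zero_sub, Dval_negone, neg_inj]
  · rcases eq_or_lt_of_le (by omega : 1 ≤ n) with h1 | h1
    · subst_eqs
      rw [(by norm_num : (1:ℤ) - 1 = 0), Dval_zero, Dval_one,
        Algebra.TensorProduct.tmul_mul_tmul, one_mul, mul_one, eq_comm, sub_eq_zero,
        AddMonoidAlgebra.one_def]
    · have h2 : 0 < n - 1 := by omega
      rw [Dval, if_pos h2, Dval, if_pos h]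
      have hN : n.toNat = (n-1).toNat + 1 := by omega
      rw [hN, Finset.sum_range_succ', mul_add, Finset.mul_sum]
      simp only [Algebra.TensorProduct.tmul_mul_tmul,
        AddMonoidAlgebra.single_mul_single, one_mul, mul_one]
      rw [Nat.cast_zero, (by ring : (-1:ℤ) + (0:ℤ) = -1), (by ring : n - 1 - (0:ℤ) = n - 1),
        add_sub_cancel_right]
      apply Finset.sum_congr rfl
      intro i _
      push_cast
      congr 2 <;> ring

/-- The derivation identity on basis elements. -/
lemma key (m n : ℤ) : Dval k (m + n) =
    (AddMonoidAlgebra.single m (1:k) ⊗ₜ[k] (1 : GA k)) * Dval k n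
      + Dval k m * ((1 : GA k) ⊗ₜ[k] AddMonoidAlgebra.single n (1:k)) := by
  induction m using Int.induction_on with
  | zero =>
    rw [zero_add, Dval_zero, zero_mul, add_zero, ← AddMonoidAlgebra.one_def,
      ← Algebra.TensorProduct.one_def, one_mul]
  | succ m ih =>
    have e1 : (m:ℤ) + 1 + n = (m + n) + 1 := by ring
    rw [e1, step1, ih, step1]
    rw [mul_add, add_mul, ← mul_assoc, ← mul_assoc]
    simp only [Algebra.TensorProduct.tmul_mul_tmul, AddMonoidAlgebra.single_mul_single,
      one_mul, mul_one]
    rw [(by ring : (1:ℤ) + (m:ℤ) = (m:ℤ) + 1)]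
    abel
  | pred m ih =>
    have e1 : (-(m:ℤ) - 1) + n = (-(m:ℤ) + n) - 1 := by ring
    rw [e1, stepneg, ih, stepneg]
    rw [GAT_sub, GAT_sub, mul_add, add_mul, GAT_neg_mul, ← mul_assoc, ← mul_assoc]
    simp only [Algebra.TensorProduct.tmul_mul_tmul, AddMonoidAlgebra.single_mul_single,
      one_mul, mul_one]
    rw [(by ring : (-1:ℤ) + -(m:ℤ) = -(m:ℤ) - 1),
      (by ring : -(m:ℤ) + n - 1 = -(m:ℤ) - 1 + n)]
    abel

lemma Δ_single (n : ℤ) (c : k) :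
    Δ k (AddMonoidAlgebra.single n c) = c • Dval k n := by
  rw [Δ, LinearMap.comp_apply, LinearEquiv.coe_coe, AddMonoidAlgebra.coeffLinearEquiv_apply,
    AddMonoidAlgebra.coeff_single]
  erw [Finsupp.lift_apply, Finsupp.sum_single_index]
  simp

lemma key_single (m n : ℤ) (c d : k) :
    Δ k (AddMonoidAlgebra.single m c * AddMonoidAlgebra.single n d) =
      ((AddMonoidAlgebra.single m c : GA k) ⊗ₜ[k] (1 : GA k)) * Δ k (AddMonoidAlgebra.single n d)
        + Δ k (AddMonoidAlgebra.single m c) *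
            ((1 : GA k) ⊗ₜ[k] (AddMonoidAlgebra.single n d : GA k)) := by
  rw [AddMonoidAlgebra.single_mul_single, Δ_single, Δ_single, Δ_single, key]
  have hm1 : (AddMonoidAlgebra.single m c : GA k) = c • AddMonoidAlgebra.single m (1:k) := by
    rw [AddMonoidAlgebra.smul_single', mul_one]
  have hn1 : (AddMonoidAlgebra.single n d : GA k) = d • AddMonoidAlgebra.single n (1:k) := by
    rw [AddMonoidAlgebra.smul_single', mul_one]
  rw [hm1, hn1, ← TensorProduct.smul_tmul', TensorProduct.tmul_smul]
  simp only [smul_mul_assoc, mul_smul_comm, smul_smul, smul_add, mul_comm d c]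

lemma step_add_left (f g y : GA k)
    (hf : Δ k (f * y) = (f ⊗ₜ[k] (1 : GA k)) * Δ k y + Δ k f * ((1 : GA k) ⊗ₜ[k] y))
    (hg : Δ k (g * y) = (g ⊗ₜ[k] (1 : GA k)) * Δ k y + Δ k g * ((1 : GA k) ⊗ₜ[k] y)) :
    Δ k ((f + g) * y) =
      ((f + g) ⊗ₜ[k] (1 : GA k)) * Δ k y + Δ k (f + g) * ((1 : GA k) ⊗ₜ[k] y) := by
  rw [add_mul, map_add, hf, hg, map_add, TensorProduct.add_tmul, add_mul, add_mul]
  abel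

lemma step_add_right (x f g : GA k)
    (hf : Δ k (x * f) = (x ⊗ₜ[k] (1 : GA k)) * Δ k f + Δ k x * ((1 : GA k) ⊗ₜ[k] f))
    (hg : Δ k (x * g) = (x ⊗ₜ[k] (1 : GA k)) * Δ k g + Δ k x * ((1 : GA k) ⊗ₜ[k] g)) :
    Δ k (x * (f + g)) =
      (x ⊗ₜ[k] (1 : GA k)) * Δ k (f + g) + Δ k x * ((1 : GA k) ⊗ₜ[k] (f + g)) := by
  rw [mul_add, map_add, hf, hg, map_add, TensorProduct.tmul_add, mul_add, mul_add]
  abel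

/-- `Δ` satisfies the infinitesimal-bialgebra (derivation) identity
`Δ(xy) = (x ⊗ 1)Δ(y) + Δ(x)(1 ⊗ y)` for all `x, y ∈ kF`. -/
theorem cyclicGroupAlgebra_coproduct_derivation (x y : GA k) :
    Δ k (x * y) =
      (x ⊗ₜ[k] (1 : GA k)) * Δ k y + Δ k x * ((1 : GA k) ⊗ₜ[k] y) := by
  induction x using AddMonoidAlgebra.induction_linear with
  | zero => simp [TensorProduct.zero_tmul]
  | add f g hf hg => exact step_add_left k f g y hf hg
  | single m c =>
    induction y using AddMonoidAlgebra.induction_linear with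
    | zero => simp [TensorProduct.tmul_zero]
    | add f g hf hg => exact step_add_right k _ f g hf hg
    | single n d => exact key_single k m n c d
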